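/- Let u : [0,T] → ℝ≥0 be a continuous function with u(t) > 0 for t > 0, and suppose there exist constants c > 0 and 0 < p < 1 such that ∫₀ᵗ c·u(s)^p ds ≤ u(t) for all t ∈ [0,T]. Then there exists a constant c' > 0 (depending only on c and p) such that u(t) ≥ c'·t^(1/(1-p)) for all t ∈ [0,T]. -/
import Mathlib


open MeasureTheory Set

/-- **Reverse Gronwall inequality.** If a continuous nonnegative function `u` on `[0,T]`,
positive for `t > 0`, satisfies `∫₀ᵗ c·u(s)^p ds ≤ u(t)` for constants `c > 0`, `0 < p < 1`,
then `u(t) ≥ c'·t^(1/(1-p))` for a constant `c' > 0` depending only on `c` and `p`. -/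
theorem stmt_0 (T : ℝ) (hT : 0 < T) (u : ℝ → ℝ)
    (hu_cont : ContinuousOn u (Icc 0 T))
    (hu_nonneg : ∀ t ∈ Icc (0:ℝ) T, 0 ≤ u t)
    (hu_pos : ∀ t ∈ Ioc (0:ℝ) T, 0 < u t)
    (c p : ℝ) (hc : 0 < c) (hp0 : 0 < p) (hp1 : p < 1)
    (hint : ∀ t ∈ Icc (0:ℝ) T, ∫ s in Ioc (0:ℝ) t, c * u s ^ p ≤ u t) :
    ∃ c' : ℝ, 0 < c' ∧ ∀ t ∈ Icc (0:ℝ) T, c' * t ^ (1 / (1 - p)) ≤ u t := by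
  set q : ℝ := 1 - p with hqdef
  have hq0 : 0 < q := by simp [hqdef]; linarith
  set g : ℝ → ℝ := fun s => c * u s ^ p with hgdef
  have hg_cont : ContinuousOn g (Icc 0 T) :=
    continuousOn_const.mul (hu_cont.rpow_const (fun x hx => Or.inr hp0.le))
  have hg_nonneg : ∀ s ∈ Icc (0:ℝ) T, 0 ≤ g s := fun s hs =>
    mul_nonneg hc.le (Real.rpow_nonneg (hu_nonneg s hs) p)
  set F : ℝ → ℝ := fun t => ∫ s in (0:ℝ)..t, g s with hFdef
  have hgint : ∀ t ∈ Icc (0:ℝ) T, IntervalIntegrable g volume 0 t := by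
    intro t ht
    exact (hg_cont.mono (Icc_subset_Icc le_rfl ht.2)).intervalIntegrable_of_Icc ht.1
  have hFle : ∀ t ∈ Icc (0:ℝ) T, F t ≤ u t := by
    intro t ht
    have h := hint t ht
    show (∫ s in (0:ℝ)..t, g s) ≤ u t
    rwa [intervalIntegral.integral_of_le ht.1]
  have hF_cont : ContinuousOn F (Icc 0 T) := by
    have := intervalIntegral.continuousOn_primitive_interval
      (μ := volume) (f := g) (a := (0:ℝ)) (b := T) ?_
    · rwa [uIcc_of_le hT.le] at this
    · rw [uIcc_of_le hT.le]
      exact (hg_cont).integrableOn_Icc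
  have hFpos : ∀ t ∈ Ioc (0:ℝ) T, 0 < F t := by
    intro t ht
    apply intervalIntegral.intervalIntegral_pos_of_pos_on
      (hgint t ⟨ht.1.le, ht.2⟩)
    · intro x hx
      exact mul_pos hc (Real.rpow_pos_of_pos (hu_pos x ⟨hx.1, hx.2.le.trans ht.2⟩) p)
    · exact ht.1
  have hF_deriv : ∀ t ∈ Ioo (0:ℝ) T, HasDerivAt F (g t) t := by
    intro t ht
    have hmem : Icc (0:ℝ) T ∈ nhds t := Icc_mem_nhds ht.1 ht.2
    have hcat : ContinuousAt g t := hg_cont.continuousAt hmem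
    exact intervalIntegral.integral_hasDerivAt_right (hgint t ⟨ht.1.le, ht.2.le⟩)
      ((hg_cont.mono Ioo_subset_Icc_self).stronglyMeasurableAtFilter isOpen_Ioo t ht) hcat
  set G : ℝ → ℝ := fun t => F t ^ q - q * c * t with hGdef
  have hG_cont : ContinuousOn G (Icc 0 T) := by
    apply ContinuousOn.sub
    · exact hF_cont.rpow_const (fun x hx => Or.inr hq0.le)
    · exact (continuous_const.mul continuous_id).continuousOn
  have hG_deriv : ∀ t ∈ Ioo (0:ℝ) T, HasDerivAt G (q * F t ^ (q - 1) * g t - q * c) t := by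
    intro t ht
    have hFt : F t ≠ 0 := (hFpos t ⟨ht.1, ht.2.le⟩).ne'
    have h1 : HasDerivAt (fun t => F t ^ q) (q * F t ^ (q - 1) * g t) t := by
      have h := (hF_deriv t ht).rpow_const (p := q) (Or.inl hFt)
      rw [show q * F t ^ (q - 1) * g t = g t * q * F t ^ (q - 1) by ring]
      exact h
    have h2 : HasDerivAt (fun t => q * c * t) (q * c) t := by
      simpa using (hasDerivAt_id t).const_mul (q * c)
    exact h1.sub h2
  have hderiv_nonneg : ∀ t ∈ Ioo (0:ℝ) T, 0 ≤ q * F t ^ (q - 1) * g t - q * c := by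
    intro t ht
    have hFt : 0 < F t := hFpos t ⟨ht.1, ht.2.le⟩
    have hFle' : F t ≤ u t := hFle t ⟨ht.1.le, ht.2.le⟩
    have hup : F t ^ p ≤ u t ^ p := Real.rpow_le_rpow hFt.le hFle' hp0.le
    have key : c ≤ F t ^ (q - 1) * g t := by
      have hq1 : q - 1 = -p := by rw [hqdef]; ring
      rw [hq1, hgdef]
      have h1 : F t ^ (-p) * (c * F t ^ p) ≤ F t ^ (-p) * (c * u t ^ p) := by
        apply mul_le_mul_of_nonneg_left _ (Real.rpow_nonneg hFt.le _)
        exact mul_le_mul_of_nonneg_left hup hc.le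
      calc c = F t ^ (-p) * (c * F t ^ p) := by
              rw [mul_comm c, ← mul_assoc, ← Real.rpow_add hFt]
              simp
        _ ≤ _ := h1
    nlinarith [mul_le_mul_of_nonneg_left key hq0.le]
  have hmono : MonotoneOn G (Icc 0 T) := by
    apply monotoneOn_of_deriv_nonneg (convex_Icc 0 T) hG_cont
    · intro t ht
      rw [interior_Icc] at ht
      exact ((hG_deriv t ht).differentiableAt).differentiableWithinAt
    · intro t ht
      rw [interior_Icc] at ht
      rw [(hG_deriv t ht).deriv]
      exact hderiv_nonneg t ht
  have hG0 : G 0 = 0 := by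
    simp [hGdef, hFdef, Real.zero_rpow hq0.ne']
  have hGge : ∀ t ∈ Icc (0:ℝ) T, q * c * t ≤ F t ^ q := by
    intro t ht
    have := hmono (left_mem_Icc.mpr hT.le) ht ht.1
    rw [hG0] at this
    simp only [hGdef] at this
    linarith
  refine ⟨(q * c) ^ (1 / q), Real.rpow_pos_of_pos (mul_pos hq0 hc) _, ?_⟩
  intro t ht
  have h1q : (1:ℝ) / (1 - p) = 1 / q := rfl
  rw [h1q]
  rcases eq_or_lt_of_le ht.1 with h0 | h0
  · subst h0
    rw [Real.zero_rpow (by positivity), mul_zero]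
    exact hu_nonneg 0 ht
  · have hFt : 0 < F t := hFpos t ⟨h0, ht.2⟩
    have h2 : (q * c * t) ^ (1 / q) ≤ (F t ^ q) ^ (1 / q) :=
      Real.rpow_le_rpow (by positivity) (hGge t ht) (by positivity)
    have h3 : (F t ^ q) ^ (1 / q) = F t := by
      rw [one_div, Real.rpow_rpow_inv hFt.le hq0.ne']
    have h4 : (q * c * t) ^ (1 / q) = (q * c) ^ (1 / q) * t ^ (1 / q) :=
      Real.mul_rpow (by positivity) h0.le
    rw [h3, h4] at h2
    exact h2.trans (hFle t ht)
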